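/- Let G be a group and X : ℂ[G] → ℂ[G] a ℂ-linear map. Then X is a derivation (i.e. X(u·v) = X(u)·v + u·X(v) for all u, v ∈ ℂ[G]) if and only if the associated function T^X : G → G → ℂ, T^X(g, a) = (X (single g 1)) (g·a), satisfies the additivity (character) condition: T^X(g₂·g₁, a) = T^X(g₂, g₁·a·g₁⁻¹) + T^X(g₁, a) for all g₁, g₂, a ∈ G. -/

import Mathlib

open MonoidAlgebra

theorem isDerivation_iff_char_additive {G : Type*} [Group G]
    (X : MonoidAlgebra ℂ G →ₗ[ℂ] MonoidAlgebra ℂ G) :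
    (∀ u v : MonoidAlgebra ℂ G, X (u * v) = X u * v + u * X v) ↔
    (∀ g₁ g₂ a : G,
      (X (MonoidAlgebra.single (g₂ * g₁) 1)).coeff (g₂ * g₁ * a) =
        (X (MonoidAlgebra.single g₂ 1)).coeff (g₂ * (g₁ * a * g₁⁻¹)) +
          (X (MonoidAlgebra.single g₁ 1)).coeff (g₁ * a)) := by
  constructor
  · intro h g₁ g₂ a
    have hd := h (single g₂ 1) (single g₁ 1)
    rw [MonoidAlgebra.single_mul_single, one_mul] at hd
    calc (X (single (g₂ * g₁) (1:ℂ))).coeff (g₂ * g₁ * a)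
        = ((X (single g₂ 1) * single g₁ 1 + single g₂ 1 * X (single g₁ 1) : MonoidAlgebra ℂ G)).coeff (g₂ * g₁ * a) := by
          rw [hd]
      _ = (X (single g₂ 1)).coeff (g₂ * g₁ * a * g₁⁻¹) + (X (single g₁ 1)).coeff (g₂⁻¹ * (g₂ * g₁ * a)) := by
          rw [MonoidAlgebra.coeff_add, Finsupp.add_apply, MonoidAlgebra.mul_single_apply,
            MonoidAlgebra.single_mul_apply, one_mul, mul_one]
      _ = _ := by
          congr 2 <;> group
  · intro h u v
    have key : ∀ g k : G, X (single (g * k) (1:ℂ)) =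
        X (single g 1) * single k 1 + single g 1 * X (single k 1) := by
      intro g k
      ext b
      have hb := h k g (k⁻¹ * (g⁻¹ * b))
      rw [MonoidAlgebra.coeff_add, Finsupp.add_apply, MonoidAlgebra.mul_single_apply,
        MonoidAlgebra.single_mul_apply, one_mul, mul_one]
      have e1 : g * k * (k⁻¹ * (g⁻¹ * b)) = b := by group
      have e2 : g * (k * (k⁻¹ * (g⁻¹ * b)) * k⁻¹) = b * k⁻¹ := by group
      have e3 : k * (k⁻¹ * (g⁻¹ * b)) = g⁻¹ * b := by group
      rw [e1, e2, e3] at hb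
      exact hb
    induction u using MonoidAlgebra.induction_linear with
    | zero => simp
    | add f g hf hg =>
        simp only [add_mul, map_add, hf, hg]; abel
    | single a b =>
        induction v using MonoidAlgebra.induction_linear with
        | zero => simp
        | add f g hf hg => simp only [mul_add, map_add, hf, hg]; abel
        | single c d =>
            have e1 : (MonoidAlgebra.single a b : MonoidAlgebra ℂ G) = b • single a 1 :=
              by rw [MonoidAlgebra.smul_single', mul_one]
            have e2 : (MonoidAlgebra.single c d : MonoidAlgebra ℂ G) = d • single c 1 :=
              by rw [MonoidAlgebra.smul_single', mul_one]
            show X (single a b * single c d) = X (single a b) * single c d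
              + single a b * X (single c d)
            rw [e1, e2, smul_mul_smul_comm, map_smul, map_smul, map_smul,
              MonoidAlgebra.single_mul_single, one_mul, key a c,
              smul_add, smul_mul_smul_comm, smul_mul_smul_comm]
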